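/- The triples of partitions with nonzero LR coefficient form an additive semigroup: if c(λ;μ,ν) ≠ 0 and c(λ';μ',ν') ≠ 0, then c(λ+λ'; μ+μ', ν+ν') ≠ 0. -/

import Mathlib

/-- A partition: a weakly decreasing sequence of naturals with finitely many
nonzero terms.  `parts i` is the `(i+1)`-st part `λ_{i+1}`. -/
structure LRPartition where
  parts : ℕ → ℕ
  antitone' : ∀ ⦃i j : ℕ⦄, i ≤ j → parts j ≤ parts i
  eventually_zero : ∃ N, ∀ i, N ≤ i → parts i = 0

namespace LRPartition

/-- Componentwise sum `λ + μ`. -/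
def add (a b : LRPartition) : LRPartition where
  parts i := a.parts i + b.parts i
  antitone' := fun _ _ h => Nat.add_le_add (a.antitone' h) (b.antitone' h)
  eventually_zero := by
    obtain ⟨M, hM⟩ := a.eventually_zero
    obtain ⟨N, hN⟩ := b.eventually_zero
    refine ⟨max M N, fun i hi => ?_⟩
    show a.parts i + b.parts i = 0
    rw [hM i (le_trans (le_max_left M N) hi), hN i (le_trans (le_max_right M N) hi)]

instance : Add LRPartition := ⟨add⟩

@[simp] theorem add_parts (a b : LRPartition) (i : ℕ) :
    (a + b).parts i = a.parts i + b.parts i := rfl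

/-- The stretched partition `n • λ = (nλ₁, nλ₂, …)`. -/
def stretch (n : ℕ) (a : LRPartition) : LRPartition where
  parts i := n * a.parts i
  antitone' := fun _ _ h => Nat.mul_le_mul_left n (a.antitone' h)
  eventually_zero := by
    obtain ⟨N, hN⟩ := a.eventually_zero
    exact ⟨N, fun i hi => by show n * a.parts i = 0; rw [hN i hi, Nat.mul_zero]⟩

instance : SMul ℕ LRPartition := ⟨stretch⟩

@[simp] theorem smul_parts (n : ℕ) (a : LRPartition) (i : ℕ) :
    (n • a).parts i = n * a.parts i := rfl

/-- Containment of Young diagrams: `μ ⊆ λ` iff `μᵢ ≤ λᵢ` for all `i`. -/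
def Sub (m l : LRPartition) : Prop := ∀ i, m.parts i ≤ l.parts i

/-- The number of (nonzero) parts, `l(λ)`. -/
noncomputable def length (a : LRPartition) : ℕ := {i | a.parts i ≠ 0}.ncard

end LRPartition

/-- `u = λ ∪ λ'`: the multiset of (positive) parts of `u` is the multiset union of
those of `λ` and `λ'`, expressed via multiplicities of every positive value `t`. -/
def IsUnion (a b u : LRPartition) : Prop :=
  ∀ t : ℕ, 0 < t →
    {i | u.parts i = t}.ncard = {i | a.parts i = t}.ncard + {i | b.parts i = t}.ncard

/-- The cells of the skew diagram `λ/μ`: boxes `(i, j)` (row `i`, column `j`,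
both 0-indexed) with `μ_{i+1} ≤ j < λ_{i+1}`. -/
def skewCells (l m : LRPartition) : Set (ℕ × ℕ) :=
  {p | m.parts p.1 ≤ p.2 ∧ p.2 < l.parts p.1}

/-- `T` is a Littlewood–Richardson tableau of shape `λ/μ` and content `ν`.
`T (i, j)` records the entry in box `(i, j)`; boxes carry positive integers and `T`
vanishes off the diagram.  Rows weakly increase, columns strictly increase, the entry
`k + 1` occurs `ν_{k+1} = ν.parts k` times, and the lattice-word condition on the
reverse reading word is expressed via its initial segments: for every `r c`, the
cells read up to position `(r, c)` are exactly those in rows `< r` together with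
those in row `r` in columns `≥ c`. -/
structure IsLRTableau (l m n : LRPartition) (T : ℕ × ℕ → ℕ) : Prop where
  sub : LRPartition.Sub m l
  pos : ∀ p ∈ skewCells l m, 0 < T p
  zero : ∀ p, p ∉ skewCells l m → T p = 0
  row_weak : ∀ i j j', (i, j) ∈ skewCells l m → (i, j') ∈ skewCells l m →
    j ≤ j' → T (i, j) ≤ T (i, j')
  col_strict : ∀ i i' j, (i, j) ∈ skewCells l m → (i', j) ∈ skewCells l m →
    i < i' → T (i, j) < T (i', j)
  content : ∀ k : ℕ, {p ∈ skewCells l m | T p = k + 1}.ncard = n.parts k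
  lattice : ∀ r c k : ℕ, 0 < k →
    {p ∈ skewCells l m | (p.1 < r ∨ (p.1 = r ∧ c ≤ p.2)) ∧ T p = k + 1}.ncard ≤
      {p ∈ skewCells l m | (p.1 < r ∨ (p.1 = r ∧ c ≤ p.2)) ∧ T p = k}.ncard

/-- The Littlewood–Richardson coefficient `c(λ; μ, ν)`: the number of LR tableaux of
shape `λ/μ` and content `ν` (zero when `μ ⊄ λ`). -/
noncomputable def LRcoeff (l m n : LRPartition) : ℕ :=
  Set.ncard {T : ℕ × ℕ → ℕ | IsLRTableau l m n T}

/-- `λ/μ` is a partition shape: `μᵢ = 0` in every nonempty row. -/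
def IsPartitionShape (l m : LRPartition) : Prop :=
  ∀ i, m.parts i < l.parts i → m.parts i = 0

/-- `λ/μ` is a rotated partition shape: `λᵢ` takes the same value in all nonempty rows. -/
def IsRotatedShape (l m : LRPartition) : Prop :=
  ∀ i j, m.parts i < l.parts i → m.parts j < l.parts j → l.parts i = l.parts j

/-- A proper skew diagram: neither a partition shape nor a rotated partition. -/
def IsProperSkew (l m : LRPartition) : Prop :=
  ¬ IsPartitionShape l m ∧ ¬ IsRotatedShape l m

/-- `λ/μ` is a basic skew diagram: `μᵢ < λᵢ` and `μᵢ ≤ λ_{i+1}` for each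
`1 ≤ i ≤ l(λ)` (no empty rows or columns). -/
def IsBasicSkew (l m : LRPartition) : Prop :=
  ∀ i, 0 < l.parts i → m.parts i < l.parts i ∧ m.parts i ≤ l.parts (i + 1)

/-- `Q^{λ,μ}_{λ',μ'}(n) = Σ_ν c(nλ+λ'; nμ+μ', ν)`, the sum over all partitions `ν`. -/
noncomputable def Qfun (l m l' m' : LRPartition) (n : ℕ) : ℕ :=
  ∑ᶠ ν : LRPartition, LRcoeff (n • l + l') (n • m + m') ν

/-- `P^{λ,μ,ν}_{λ',μ',ν'}(n) = c(nλ+λ'; nμ+μ', nν+ν')`. -/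
noncomputable def Pfun (l m nu l' m' nu' : LRPartition) (n : ℕ) : ℕ :=
  LRcoeff (n • l + l') (n • m + m') (n • nu + nu')

/-- The partition `(1^a)` consisting of `a` parts equal to `1`. -/
def onesPartition (a : ℕ) : LRPartition where
  parts i := if i < a then 1 else 0
  antitone' := by intro i j h; split_ifs <;> omega
  eventually_zero := ⟨a, fun i hi => by split_ifs <;> omega⟩

/-- The partition `(a)` with a single part `a` (the empty partition if `a = 0`). -/
def singlePartition (a : ℕ) : LRPartition where
  parts i := if i = 0 then a else 0
  antitone' := by intro i j h; split_ifs <;> omega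
  eventually_zero := ⟨1, fun i hi => by split_ifs <;> omega⟩
section LRAux

lemma mem_skewCells {l m : LRPartition} {p : ℕ × ℕ} :
    p ∈ skewCells l m ↔ m.parts p.1 ≤ p.2 ∧ p.2 < l.parts p.1 := Iff.rfl

lemma skewCells_finite (l m : LRPartition) : (skewCells l m).Finite := by
  obtain ⟨N, hN⟩ := l.eventually_zero
  apply Set.Finite.subset ((Finset.range N ×ˢ Finset.range (l.parts 0)).finite_toSet)
  rintro ⟨i, j⟩ ⟨h1, h2⟩
  have h1' : m.parts i ≤ j := h1
  have h2' : j < l.parts i := h2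
  clear h1 h2
  simp only [Finset.coe_product, Set.mem_prod, Finset.mem_coe, Finset.mem_range]
  have hi : i < N := by
    by_contra hc
    have := hN i (by omega)
    omega
  exact ⟨hi, lt_of_lt_of_le h2' (l.antitone' (Nat.zero_le i))⟩

lemma lower_eq_Ico {a b : ℕ} {S : Finset ℕ} (hsub : S ⊆ Finset.Ico a b)
    (hlow : ∀ j ∈ S, ∀ j', a ≤ j' → j' ≤ j → j' ∈ S) :
    S = Finset.Ico a (a + S.card) := by
  have hsub2 : S ⊆ Finset.Ico a (a + S.card) := by
    intro j hj
    have h1 : Finset.Icc a j ⊆ S := by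
      intro j' hj'
      rw [Finset.mem_Icc] at hj'
      exact hlow j hj j' hj'.1 hj'.2
    have h2 := Finset.card_le_card h1
    rw [Nat.card_Icc] at h2
    have ha : a ≤ j := (Finset.mem_Ico.1 (hsub hj)).1
    exact Finset.mem_Ico.2 ⟨ha, by omega⟩
  exact Finset.eq_of_subset_of_card_le hsub2 (by rw [Nat.card_Ico]; omega)

/-- `rowF l m T i k = μᵢ + #{cells in row i with entry ≤ k}`. -/
def rowF (l m : LRPartition) (T : ℕ × ℕ → ℕ) (i k : ℕ) : ℕ :=
  m.parts i + ((Finset.Ico (m.parts i) (l.parts i)).filter (fun j => T (i, j) ≤ k)).card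

variable {l m n : LRPartition} {T : ℕ × ℕ → ℕ}

lemma le_rowF (l m : LRPartition) (T : ℕ × ℕ → ℕ) (i k : ℕ) :
    m.parts i ≤ rowF l m T i k := Nat.le_add_right _ _

lemma rowF_le (hT : IsLRTableau l m n T) (i k : ℕ) : rowF l m T i k ≤ l.parts i := by
  have h1 : ((Finset.Ico (m.parts i) (l.parts i)).filter (fun j => T (i, j) ≤ k)).card
      ≤ (Finset.Ico (m.parts i) (l.parts i)).card := Finset.card_filter_le _ _
  rw [Nat.card_Ico] at h1
  have := hT.sub i
  unfold rowF
  omega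

lemma rowF_mono (l m : LRPartition) (T : ℕ × ℕ → ℕ) (i : ℕ) {k k' : ℕ} (h : k ≤ k') :
    rowF l m T i k ≤ rowF l m T i k' := by
  unfold rowF
  have hsub : (Finset.Ico (m.parts i) (l.parts i)).filter (fun j => T (i, j) ≤ k)
      ⊆ (Finset.Ico (m.parts i) (l.parts i)).filter (fun j => T (i, j) ≤ k') := by
    intro j hj
    rw [Finset.mem_filter] at *
    exact ⟨hj.1, le_trans hj.2 h⟩
  have := Finset.card_le_card hsub
  omega

lemma rowF_filter_eq (hT : IsLRTableau l m n T) (i k : ℕ) :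
    (Finset.Ico (m.parts i) (l.parts i)).filter (fun j => T (i, j) ≤ k)
      = Finset.Ico (m.parts i) (rowF l m T i k) := by
  unfold rowF
  apply lower_eq_Ico (Finset.filter_subset _ _)
  intro j hj j' h1 h2
  rw [Finset.mem_filter, Finset.mem_Ico] at hj ⊢
  have hcell' : (m.parts i ≤ j' ∧ j' < l.parts i) := ⟨h1, lt_of_le_of_lt h2 hj.1.2⟩
  refine ⟨hcell', ?_⟩
  exact le_trans (hT.row_weak i j' j hcell' ⟨hj.1.1, hj.1.2⟩ h2) hj.2

lemma rowF_char (hT : IsLRTableau l m n T) {i j : ℕ} (h1 : m.parts i ≤ j)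
    (h2 : j < l.parts i) (k : ℕ) : T (i, j) ≤ k ↔ j < rowF l m T i k := by
  have hmem : j ∈ Finset.Ico (m.parts i) (l.parts i) := Finset.mem_Ico.2 ⟨h1, h2⟩
  constructor
  · intro hk
    have hmem2 : j ∈ (Finset.Ico (m.parts i) (l.parts i)).filter (fun j => T (i, j) ≤ k) :=
      Finset.mem_filter.2 ⟨hmem, hk⟩
    rw [rowF_filter_eq hT, Finset.mem_Ico] at hmem2
    exact hmem2.2
  · intro hk
    have hmem2 : j ∈ Finset.Ico (m.parts i) (rowF l m T i k) := Finset.mem_Ico.2 ⟨h1, hk⟩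
    rw [← rowF_filter_eq hT, Finset.mem_filter] at hmem2
    exact hmem2.2

lemma rowF_zero (hT : IsLRTableau l m n T) (i : ℕ) : rowF l m T i 0 = m.parts i := by
  unfold rowF
  have he : (Finset.Ico (m.parts i) (l.parts i)).filter (fun j => T (i, j) ≤ 0) = ∅ := by
    rw [Finset.filter_eq_empty_iff]
    intro j hj
    rw [Finset.mem_Ico] at hj
    have := hT.pos (i, j) ⟨hj.1, hj.2⟩
    omega
  rw [he]
  simp

lemma entry_le (hT : IsLRTableau l m n T) {K : ℕ} (hK : ∀ k, K ≤ k → n.parts k = 0)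
    {p : ℕ × ℕ} (hp : p ∈ skewCells l m) : T p ≤ K := by
  by_contra hc
  push_neg at hc
  have hpos := hT.pos p hp
  have hv : T p = (T p - 1) + 1 := by omega
  have hcont := hT.content (T p - 1)
  have hfin : ({q ∈ skewCells l m | T q = (T p - 1) + 1}).Finite :=
    (skewCells_finite l m).subset (fun q hq => hq.1)
  have hne : ({q ∈ skewCells l m | T q = (T p - 1) + 1}).Nonempty := ⟨p, hp, hv⟩
  have h0 : n.parts (T p - 1) ≠ 0 := by
    rw [← hcont]
    intro h0
    rw [Set.ncard_eq_zero hfin] at h0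
    rw [h0] at hne
    exact Set.not_nonempty_empty hne
  have := hK (T p - 1) (by omega)
  omega

lemma rowF_top (hT : IsLRTableau l m n T) {K : ℕ} (hK : ∀ k, K ≤ k → n.parts k = 0)
    (i : ℕ) {k : ℕ} (hk : K ≤ k) : rowF l m T i k = l.parts i := by
  unfold rowF
  have he : (Finset.Ico (m.parts i) (l.parts i)).filter (fun j => T (i, j) ≤ k)
      = Finset.Ico (m.parts i) (l.parts i) := by
    rw [Finset.filter_eq_self]
    intro j hj
    rw [Finset.mem_Ico] at hj
    exact le_trans (entry_le hT hK (show (i, j) ∈ skewCells l m from ⟨hj.1, hj.2⟩)) hk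
  rw [he, Nat.card_Ico]
  have := hT.sub i
  omega

lemma rowF_interlace (hT : IsLRTableau l m n T) (i k : ℕ) :
    rowF l m T (i + 1) (k + 1) ≤ rowF l m T i k := by
  by_contra hc
  push_neg at hc
  set j := rowF l m T (i + 1) (k + 1) - 1 with hj
  have hm : m.parts i ≤ rowF l m T i k := le_rowF l m T i k
  have hm1 : m.parts (i + 1) ≤ m.parts i := m.antitone' (Nat.le_succ i)
  have hjlt : j < rowF l m T (i + 1) (k + 1) := by omega
  have hjge : rowF l m T i k ≤ j := by omega
  have hl1 : l.parts (i + 1) ≤ l.parts i := l.antitone' (Nat.le_succ i)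
  have hle1 : rowF l m T (i + 1) (k + 1) ≤ l.parts (i + 1) := rowF_le hT (i + 1) (k + 1)
  have hcell1 : m.parts (i + 1) ≤ j ∧ j < l.parts (i + 1) := ⟨by omega, by omega⟩
  have hcell0 : m.parts i ≤ j ∧ j < l.parts i := ⟨by omega, by omega⟩
  have h1 : T (i + 1, j) ≤ k + 1 := (rowF_char hT hcell1.1 hcell1.2 (k + 1)).2 hjlt
  have h2 : ¬ T (i, j) ≤ k := fun hh => by
    have := (rowF_char hT hcell0.1 hcell0.2 k).1 hh
    omega
  have h3 := hT.col_strict i (i + 1) j ⟨hcell0.1, hcell0.2⟩ ⟨hcell1.1, hcell1.2⟩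
    (Nat.lt_succ_self i)
  omega

lemma segCount (l m : LRPartition) (T : ℕ × ℕ → ℕ) (F : ℕ → ℕ → ℕ)
    (hchar : ∀ i j k, m.parts i ≤ j → j < l.parts i → (T (i, j) ≤ k ↔ j < F i k))
    (hlow : ∀ i k, m.parts i ≤ F i k) (hhigh : ∀ i k, F i k ≤ l.parts i)
    (r c k : ℕ) :
    {p ∈ skewCells l m | (p.1 < r ∨ (p.1 = r ∧ c ≤ p.2)) ∧ T p = k + 1}.ncard
      = (∑ i ∈ Finset.range r, (F i (k + 1) - F i k)) + (F r (k + 1) - max (F r k) c) := by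
  classical
  set A : Finset (ℕ × ℕ) :=
    ((Finset.range r).biUnion fun i =>
        (Finset.Ico (F i k) (F i (k + 1))).image fun j => (i, j)) ∪
      ((Finset.Ico (max (F r k) c) (F r (k + 1))).image fun j => (r, j)) with hA
  have key : ∀ i j, (F i k ≤ j ∧ j < F i (k + 1)) ↔
      ((m.parts i ≤ j ∧ j < l.parts i) ∧ T (i, j) = k + 1) := by
    intro i j
    constructor
    · rintro ⟨h1, h2⟩
      have hc1 : m.parts i ≤ j := le_trans (hlow i k) h1
      have hc2 : j < l.parts i := lt_of_lt_of_le h2 (hhigh i (k + 1))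
      have ha := (hchar i j (k + 1) hc1 hc2).2 h2
      have hb : ¬ T (i, j) ≤ k := fun hh => by
        have := (hchar i j k hc1 hc2).1 hh
        omega
      exact ⟨⟨hc1, hc2⟩, by omega⟩
    · rintro ⟨⟨hc1, hc2⟩, hv⟩
      constructor
      · by_contra hh
        push_neg at hh
        have := (hchar i j k hc1 hc2).2 hh
        omega
      · exact (hchar i j (k + 1) hc1 hc2).1 (by omega)
  have hset : {p ∈ skewCells l m | (p.1 < r ∨ (p.1 = r ∧ c ≤ p.2)) ∧ T p = k + 1}
      = ↑A := by
    ext ⟨i, j⟩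
    simp only [Set.mem_sep_iff, mem_skewCells, hA, Finset.coe_union, Set.mem_union,
      Finset.mem_coe, Finset.mem_biUnion, Finset.mem_image, Finset.mem_range,
      Finset.mem_Ico, Prod.mk.injEq]
    constructor
    · rintro ⟨hcell, hpred, hval⟩
      have hFj : F i k ≤ j ∧ j < F i (k + 1) := (key i j).2 ⟨hcell, hval⟩
      rcases hpred with hlt | ⟨rfl, hc⟩
      · exact Or.inl ⟨i, hlt, j, ⟨hFj.1, hFj.2⟩, rfl, rfl⟩
      · exact Or.inr ⟨j, ⟨max_le hFj.1 hc, hFj.2⟩, rfl, rfl⟩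
    · rintro (⟨a, ha, b, hb, rfl, rfl⟩ | ⟨b, hb, rfl, rfl⟩)
      · obtain ⟨hcell, hval⟩ := (key a b).1 ⟨hb.1, hb.2⟩
        exact ⟨hcell, Or.inl ha, hval⟩
      · have hFb : F r k ≤ b ∧ b < F r (k + 1) :=
          ⟨le_trans (le_max_left _ _) hb.1, hb.2⟩
        obtain ⟨hcell, hval⟩ := (key r b).1 hFb
        exact ⟨hcell, Or.inr ⟨rfl, le_trans (le_max_right _ _) hb.1⟩, hval⟩
  rw [hset, Set.ncard_coe_finset]
  have hinj : ∀ i : ℕ, Function.Injective fun j => ((i, j) : ℕ × ℕ) := by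
    intro i x y hxy
    simpa using hxy
  have hdisj : Disjoint ((Finset.range r).biUnion fun i =>
      (Finset.Ico (F i k) (F i (k + 1))).image fun j => (i, j))
      ((Finset.Ico (max (F r k) c) (F r (k + 1))).image fun j => (r, j)) := by
    rw [Finset.disjoint_left]
    rintro ⟨a, b⟩ h1 h2
    simp only [Finset.mem_biUnion, Finset.mem_image, Finset.mem_range, Prod.mk.injEq] at h1 h2
    obtain ⟨x, hx, y, _, rfl, rfl⟩ := h1
    obtain ⟨y', _, hr, _⟩ := h2
    omega
  have hpd : ∀ x ∈ Finset.range r, ∀ y ∈ Finset.range r, x ≠ y →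
      Disjoint ((Finset.Ico (F x k) (F x (k + 1))).image fun j => ((x, j) : ℕ × ℕ))
        ((Finset.Ico (F y k) (F y (k + 1))).image fun j => (y, j)) := by
    intro x _ y _ hxy
    rw [Finset.disjoint_left]
    rintro ⟨a, b⟩ h1 h2
    simp only [Finset.mem_image, Prod.mk.injEq] at h1 h2
    obtain ⟨_, _, h1a, _⟩ := h1
    obtain ⟨_, _, h2a, _⟩ := h2
    exact hxy (h1a.symm ▸ h2a ▸ rfl)
  rw [hA, Finset.card_union_of_disjoint hdisj, Finset.card_biUnion hpd,
    Finset.card_image_of_injective _ (hinj r), Nat.card_Ico]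
  congr 1
  apply Finset.sum_congr rfl
  intro i _
  rw [Finset.card_image_of_injective _ (hinj i), Nat.card_Ico]

lemma fullCount (l m : LRPartition) (T : ℕ × ℕ → ℕ) (F : ℕ → ℕ → ℕ)
    (hchar : ∀ i j k, m.parts i ≤ j → j < l.parts i → (T (i, j) ≤ k ↔ j < F i k))
    (hlow : ∀ i k, m.parts i ≤ F i k) (hhigh : ∀ i k, F i k ≤ l.parts i)
    {N : ℕ} (hN : ∀ i, N ≤ i → l.parts i = 0) (k : ℕ) :
    {p ∈ skewCells l m | T p = k + 1}.ncard
      = ∑ i ∈ Finset.range N, (F i (k + 1) - F i k) := by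
  have hsets : {p ∈ skewCells l m | T p = k + 1}
      = {p ∈ skewCells l m | (p.1 < N ∨ (p.1 = N ∧ 0 ≤ p.2)) ∧ T p = k + 1} := by
    ext ⟨i, j⟩
    simp only [Set.mem_sep_iff, mem_skewCells]
    constructor
    · rintro ⟨hcell, hval⟩
      refine ⟨hcell, ⟨?_, hval⟩⟩
      left
      have hc2 : j < l.parts i := hcell.2
      by_contra hc
      have := hN i (by omega)
      omega
    · rintro ⟨hcell, _, hval⟩
      exact ⟨hcell, hval⟩
  rw [hsets, segCount l m T F hchar hlow hhigh N 0 k]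
  have h1 : F N (k + 1) = 0 := by
    have := hhigh N (k + 1)
    have := hN N le_rfl
    omega
  rw [h1]
  simp

lemma lr_latticeL (hT : IsLRTableau l m n T) (r k : ℕ) :
    (∑ i ∈ Finset.range r, (rowF l m T i (k + 1 + 1) - rowF l m T i (k + 1)))
      + (rowF l m T r (k + 1 + 1) - rowF l m T r (k + 1))
      ≤ ∑ i ∈ Finset.range r, (rowF l m T i (k + 1) - rowF l m T i k) := by
  have hchar : ∀ i j kk, m.parts i ≤ j → j < l.parts i →
      (T (i, j) ≤ kk ↔ j < rowF l m T i kk) := fun i j kk h1 h2 => rowF_char hT h1 h2 kk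
  have hL := hT.lattice r (rowF l m T r (k + 1)) (k + 1) (Nat.succ_pos k)
  rw [segCount l m T (rowF l m T) hchar (le_rowF l m T) (rowF_le hT) r _ (k + 1),
      segCount l m T (rowF l m T) hchar (le_rowF l m T) (rowF_le hT) r _ k] at hL
  have h1 : max (rowF l m T r (k + 1)) (rowF l m T r (k + 1)) = rowF l m T r (k + 1) :=
    max_self _
  have h2 : max (rowF l m T r k) (rowF l m T r (k + 1)) = rowF l m T r (k + 1) :=
    max_eq_right (rowF_mono l m T r (Nat.le_succ k))
  rw [h1, h2] at hL
  omega

lemma lr_finite (l m n : LRPartition) : {T : ℕ × ℕ → ℕ | IsLRTableau l m n T}.Finite := by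
  classical
  obtain ⟨K, hK⟩ := n.eventually_zero
  have hC : (skewCells l m).Finite := skewCells_finite l m
  haveI := hC.to_subtype
  rw [← Set.finite_coe_iff]
  have hbound : ∀ T : ℕ × ℕ → ℕ, IsLRTableau l m n T → ∀ p, T p ≤ K := by
    intro T hT p
    by_cases hp : p ∈ skewCells l m
    · exact entry_le hT (fun k hk => hK k hk) hp
    · rw [hT.zero p hp]
      exact Nat.zero_le _
  apply Finite.of_injective (fun T : {T : ℕ × ℕ → ℕ // IsLRTableau l m n T} =>
    fun x : skewCells l m => (⟨T.1 x.1, Nat.lt_succ_of_le (hbound T.1 T.2 x.1)⟩ : Fin (K + 1)))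
  intro T T' hTT
  apply Subtype.ext
  funext p
  by_cases hp : p ∈ skewCells l m
  · have := congrFun hTT ⟨p, hp⟩
    simpa [Fin.mk.injEq] using this
  · rw [T.2.zero p hp, T'.2.zero p hp]

end LRAux
/-- The triples of partitions with nonzero LR coefficient form an
additive semigroup: if `c(λ;μ,ν) ≠ 0` and `c(λ';μ',ν') ≠ 0`, then
`c(λ+λ'; μ+μ', ν+ν') ≠ 0`. -/
theorem lr_nonzero_add (l m n l' m' n' : LRPartition)
    (h : LRcoeff l m n ≠ 0) (h' : LRcoeff l' m' n' ≠ 0) :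
    LRcoeff (l + l') (m + m') (n + n') ≠ 0 := by
  classical
  obtain ⟨T, hT⟩ := Set.nonempty_of_ncard_ne_zero h
  obtain ⟨T', hT'⟩ := Set.nonempty_of_ncard_ne_zero h'
  replace hT : IsLRTableau l m n T := hT
  replace hT' : IsLRTableau l' m' n' T' := hT'
  obtain ⟨K1, hK1⟩ := n.eventually_zero
  obtain ⟨K2, hK2⟩ := n'.eventually_zero
  have hKn : ∀ k, max K1 K2 ≤ k → n.parts k = 0 :=
    fun k hk => hK1 k (le_trans (le_max_left _ _) hk)
  have hKn' : ∀ k, max K1 K2 ≤ k → n'.parts k = 0 :=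
    fun k hk => hK2 k (le_trans (le_max_right _ _) hk)
  set K := max K1 K2 with hKdef
  obtain ⟨N1, hN1⟩ := l.eventually_zero
  obtain ⟨N2, hN2⟩ := l'.eventually_zero
  have hNl : ∀ i, max N1 N2 ≤ i → l.parts i = 0 :=
    fun i hi => hN1 i (le_trans (le_max_left _ _) hi)
  have hNl' : ∀ i, max N1 N2 ≤ i → l'.parts i = 0 :=
    fun i hi => hN2 i (le_trans (le_max_right _ _) hi)
  set N := max N1 N2 with hNdef
  have hNsum : ∀ i, N ≤ i → (l + l').parts i = 0 := fun i hi => by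
    rw [LRPartition.add_parts, hNl i hi, hNl' i hi]
  set G : ℕ → ℕ → ℕ := fun i k => rowF l m T i k + rowF l' m' T' i k with hGdef
  have hG0 : ∀ i, G i 0 = (m + m').parts i := by
    intro i
    simp only [hGdef]
    rw [rowF_zero hT, rowF_zero hT', LRPartition.add_parts]
  have hGmono : ∀ i, ∀ {k k' : ℕ}, k ≤ k' → G i k ≤ G i k' := by
    intro i k k' hkk
    simp only [hGdef]
    exact Nat.add_le_add (rowF_mono l m T i hkk) (rowF_mono l' m' T' i hkk)
  have hlowG : ∀ i k, (m + m').parts i ≤ G i k := by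
    intro i k
    simp only [hGdef, LRPartition.add_parts]
    exact Nat.add_le_add (le_rowF l m T i k) (le_rowF l' m' T' i k)
  have hhighG : ∀ i k, G i k ≤ (l + l').parts i := by
    intro i k
    simp only [hGdef, LRPartition.add_parts]
    exact Nat.add_le_add (rowF_le hT i k) (rowF_le hT' i k)
  have hGtop : ∀ i, G i K = (l + l').parts i := by
    intro i
    simp only [hGdef, LRPartition.add_parts]
    rw [rowF_top hT hKn i le_rfl, rowF_top hT' hKn' i le_rfl]
  have hGint : ∀ a b, G (a + 1) (b + 1) ≤ G a b := by
    intro a b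
    simp only [hGdef]
    exact Nat.add_le_add (rowF_interlace hT a b) (rowF_interlace hT' a b)
  have hex : ∀ p : ℕ × ℕ, p ∈ skewCells (l + l') (m + m') → ∃ k, p.2 < G p.1 k := by
    rintro ⟨i, j⟩ ⟨h1, h2⟩
    exact ⟨K, by rw [hGtop i]; exact h2⟩
  set U : ℕ × ℕ → ℕ := fun p =>
    if hp : p ∈ skewCells (l + l') (m + m') then Nat.find (hex p hp) else 0 with hUdef
  have hUchar : ∀ p : ℕ × ℕ, p ∈ skewCells (l + l') (m + m') →
      ∀ k, (U p ≤ k ↔ p.2 < G p.1 k) := by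
    intro p hp k
    simp only [hUdef]
    rw [dif_pos hp, Nat.find_le_iff]
    constructor
    · rintro ⟨k', hk', hlt⟩
      exact lt_of_lt_of_le hlt (hGmono p.1 hk')
    · intro hlt
      exact ⟨k, le_rfl, hlt⟩
  have hcharG : ∀ i j k, (m + m').parts i ≤ j → j < (l + l').parts i →
      (U (i, j) ≤ k ↔ j < G i k) :=
    fun i j k h1 h2 => hUchar (i, j) (mem_skewCells.2 ⟨h1, h2⟩) k
  have hcharT : ∀ i j k, m.parts i ≤ j → j < l.parts i →
      (T (i, j) ≤ k ↔ j < rowF l m T i k) := fun i j k h1 h2 => rowF_char hT h1 h2 k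
  have hcharT' : ∀ i j k, m'.parts i ≤ j → j < l'.parts i →
      (T' (i, j) ≤ k ↔ j < rowF l' m' T' i k) := fun i j k h1 h2 => rowF_char hT' h1 h2 k
  have hsplit : ∀ (r kk : ℕ), ∑ i ∈ Finset.range r, (G i (kk + 1) - G i kk)
      = (∑ i ∈ Finset.range r, (rowF l m T i (kk + 1) - rowF l m T i kk))
        + ∑ i ∈ Finset.range r, (rowF l' m' T' i (kk + 1) - rowF l' m' T' i kk) := by
    intro r kk
    rw [← Finset.sum_add_distrib]
    apply Finset.sum_congr rfl
    intro i _
    have h1 := rowF_mono l m T i (Nat.le_add_right kk 1)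
    have h2 := rowF_mono l' m' T' i (Nat.le_add_right kk 1)
    simp only [hGdef]
    omega
  have hUpos : ∀ p ∈ skewCells (l + l') (m + m'), 0 < U p := by
    rintro ⟨i, j⟩ hp
    rcases Nat.eq_zero_or_pos (U (i, j)) with h0 | h0
    · exfalso
      have hlt : j < G i 0 := (hUchar (i, j) hp 0).1 (le_of_eq h0)
      have hg := hG0 i
      have hp1 : (m + m').parts i ≤ j := hp.1
      omega
    · exact h0
  have hULR : IsLRTableau (l + l') (m + m') (n + n') U := by
    refine ⟨?_, hUpos, ?_, ?_, ?_, ?_, ?_⟩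
    · intro i
      rw [LRPartition.add_parts, LRPartition.add_parts]
      exact Nat.add_le_add (hT.sub i) (hT'.sub i)
    · intro p hp
      simp only [hUdef]
      rw [dif_neg hp]
    · intro i j j' hj hj' hle
      have h2 := (hUchar (i, j') hj' (U (i, j'))).1 le_rfl
      exact (hUchar (i, j) hj (U (i, j'))).2 (lt_of_le_of_lt hle h2)
    · intro i i' j hij hi'j hii'
      have hstep : ∀ d a b, G (a + d) (b + d) ≤ G a b := by
        intro d
        induction d with
        | zero => intro a b; exact le_rfl
        | succ d ih =>
          intro a b
          calc G (a + (d + 1)) (b + (d + 1)) = G ((a + d) + 1) ((b + d) + 1) := rfl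
            _ ≤ G (a + d) (b + d) := hGint _ _
            _ ≤ G a b := ih a b
      have hkpos : 0 < U (i, j) := hUpos (i, j) hij
      have hnot : ¬ U (i, j) ≤ U (i, j) - 1 := by omega
      have hjge : ¬ j < G i (U (i, j) - 1) := fun hh => hnot ((hUchar (i, j) hij _).2 hh)
      push_neg at hjge
      have hii : i + (i' - i) = i' := by omega
      have hst := hstep (i' - i) i (U (i, j) - 1)
      rw [hii] at hst
      have hfar : ¬ U (i', j) ≤ (U (i, j) - 1) + (i' - i) := by
        intro hh
        have hcontr : j < G i' ((U (i, j) - 1) + (i' - i)) :=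
          (hUchar (i', j) hi'j _).1 hh
        omega
      omega
    · intro k
      have hcU := fullCount (l + l') (m + m') U G hcharG hlowG hhighG hNsum k
      have hcT : (∑ i ∈ Finset.range N, (rowF l m T i (k + 1) - rowF l m T i k))
          = n.parts k := by
        rw [← fullCount l m T (rowF l m T) hcharT (le_rowF l m T) (rowF_le hT) hNl k,
          hT.content k]
      have hcT' : (∑ i ∈ Finset.range N, (rowF l' m' T' i (k + 1) - rowF l' m' T' i k))
          = n'.parts k := by
        rw [← fullCount l' m' T' (rowF l' m' T') hcharT' (le_rowF l' m' T') (rowF_le hT')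
          hNl' k, hT'.content k]
      rw [hcU, hsplit N k, hcT, hcT', LRPartition.add_parts]
    · intro r c k hk
      obtain ⟨k0, rfl⟩ : ∃ k0, k = k0 + 1 := ⟨k - 1, by omega⟩
      rw [segCount (l + l') (m + m') U G hcharG hlowG hhighG r c (k0 + 1),
          segCount (l + l') (m + m') U G hcharG hlowG hhighG r c k0]
      have hLT := lr_latticeL hT r k0
      have hLT' := lr_latticeL hT' r k0
      have e1 := hsplit r (k0 + 1)
      have e2 := hsplit r k0
      have g1 : G r (k0 + 1 + 1) = rowF l m T r (k0 + 1 + 1) + rowF l' m' T' r (k0 + 1 + 1) := rfl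
      have g2 : G r (k0 + 1) = rowF l m T r (k0 + 1) + rowF l' m' T' r (k0 + 1) := rfl
      have g3 : G r k0 = rowF l m T r k0 + rowF l' m' T' r k0 := rfl
      have m1 := rowF_mono l m T r (Nat.le_add_right (k0 + 1) 1)
      have m2 := rowF_mono l' m' T' r (Nat.le_add_right (k0 + 1) 1)
      have m3 := rowF_mono l m T r (Nat.le_add_right k0 1)
      have m4 := rowF_mono l' m' T' r (Nat.le_add_right k0 1)
      have hm1 : G r (k0 + 1) ≤ max (G r (k0 + 1)) c := le_max_left _ _
      omega
  intro h0
  have hfin := lr_finite (l + l') (m + m') (n + n')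
  unfold LRcoeff at h0
  rw [Set.ncard_eq_zero hfin] at h0
  have hmem : U ∈ {T : ℕ × ℕ → ℕ | IsLRTableau (l + l') (m + m') (n + n') T} := hULR
  rw [h0] at hmem
  exact Set.notMem_empty U hmem
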